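/- Let n ∈ ℕ and let B, C, X, Z be n×n complex matrices such that X² + B·X + C = 0, Z² + B·Z + C = 0, and X − Z is invertible. Then the spectrum of the pencil satisfies σ(B,C) = σ(X) ∪ σ(Z); equivalently, for every λ ∈ ℂ, the matrix λ²·1 + λ·B + C is invertible if and only if both λ·1 − X and λ·1 − Z are invertible. -/
import Mathlib


/-- If `X`, `Z` form a complete pair of right solvents, then
`σ(B,C) = σ(X) ∪ σ(Z)`; equivalently, for every `λ`, the matrix `λ²·1 + λ·B + C` is
invertible iff both `λ·1 − X` and `λ·1 − Z` are invertible. -/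
theorem pencil_spectrum_of_complete_pair (n : ℕ) (B C X Z : Matrix (Fin n) (Fin n) ℂ)
    (hX : X ^ 2 + B * X + C = 0) (hZ : Z ^ 2 + B * Z + C = 0) (hXZ : IsUnit (X - Z)) :
    ∀ lam : ℂ,
      IsUnit ((lam ^ 2) • (1 : Matrix (Fin n) (Fin n) ℂ) + lam • B + C) ↔
        (IsUnit (lam • (1 : Matrix (Fin n) (Fin n) ℂ) - X) ∧
          IsUnit (lam • (1 : Matrix (Fin n) (Fin n) ℂ) - Z)) := by
  intro lam
  have hC : C = -(X ^ 2 + B * X) := by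
    have := hX
    linear_combination (norm := noncomm_ring) hX
  have hdiff : X ^ 2 + B * X = Z ^ 2 + B * Z := by
    have h := hX.trans hZ.symm
    exact add_right_cancel h
  set A := lam • (1 : Matrix (Fin n) (Fin n) ℂ) + B + X with hA
  have key1 : (lam ^ 2) • (1 : Matrix (Fin n) (Fin n) ℂ) + lam • B + C
      = A * (lam • (1 : Matrix (Fin n) (Fin n) ℂ) - X) := by
    rw [hC, hA]
    simp only [Algebra.smul_def, map_pow]
    noncomm_ring
    simp only [Algebra.commutes]
    abel
  have key2 : A * (X - Z) = (X - Z) * (lam • (1 : Matrix (Fin n) (Fin n) ℂ) - Z) := by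
    rw [hA]
    have : (B + X) * (X - Z) = -((X - Z) * Z) := by
      linear_combination (norm := noncomm_ring) hdiff
    linear_combination (norm := (simp only [Algebra.smul_def]; noncomm_ring; simp only [Algebra.commutes]; abel)) this
  have hdA : A.det = (lam • (1 : Matrix (Fin n) (Fin n) ℂ) - Z).det := by
    have h := congrArg Matrix.det key2
    rw [Matrix.det_mul, Matrix.det_mul] at h
    have hu : (X - Z).det ≠ 0 := ((Matrix.isUnit_iff_isUnit_det _).mp hXZ).ne_zero
    exact mul_right_cancel₀ hu (by linear_combination h)
  rw [Matrix.isUnit_iff_isUnit_det, Matrix.isUnit_iff_isUnit_det, Matrix.isUnit_iff_isUnit_det,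
    key1, Matrix.det_mul, hdA, IsUnit.mul_iff, and_comm]
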